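/- Let A₁, …, A_m ∈ ℝ^{d×d} be symmetric, pairwise commuting, linearly independent matrices and y₁, …, y_m ∈ ℝ. For each α > 0 let W_{α,1}, W_{α,2} : [0,∞) → ℝ^{d×d} be differentiable with W_{α,1}(0) = W_{α,2}(0) = α·I and, for all t ≥ 0, W_{α,1}′(t) = −W_{α,2}(t)ᵀ·∇ℓ(W_{α,2}(t)·W_{α,1}(t)) and W_{α,2}′(t) = −∇ℓ(W_{α,2}(t)·W_{α,1}(t))·W_{α,1}(t)ᵀ, where ∇ℓ(W) = Σ_{i=1}^m (⟨A_i, W⟩ − y_i)·A_i (gradient flow on the asymmetric depth-2 factorization (W₁, W₂) ↦ ℓ(W₂W₁) initialized at α·I). Assume that for every α > 0 the limit W_∞(α) := lim_{t→∞} W_{α,2}(t)·W_{α,1}(t) exists, that the limit W̄ := lim_{α→0⁺} W_∞(α) exists, that W̄ is positive semidefinite, and that ⟨A_i, W̄⟩ = y_i for all i. Then for every positive semidefinite W ∈ ℝ^{d×d} with ⟨A_i, W⟩ = y_i for all i, tr(W̄) ≤ tr(W); i.e., W̄ has minimal nuclear norm among feasible positive semidefinite matrices. -/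

import Mathlib

open Matrix Filter Topology

/-- The Frobenius gradient of the loss `ℓ(W) = ½ Σᵢ (yᵢ − ⟨Aᵢ, W⟩)²`, where
`⟨A, W⟩ = tr(Aᵀ W)` is the Frobenius inner product. -/
noncomputable def gradLoss {d m : ℕ} (A : Fin m → Matrix (Fin d) (Fin d) ℝ)
    (y : Fin m → ℝ) (W : Matrix (Fin d) (Fin d) ℝ) : Matrix (Fin d) (Fin d) ℝ :=
  ∑ i, ((((A i)ᵀ * W).trace) - y i) • A i


set_option linter.unusedVariables false

section Helpers
open Set




lemma sum_mulVec' {d m : ℕ} (F : Fin m → Matrix (Fin d) (Fin d) ℝ) (x : Fin d → ℝ) :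
    (∑ i, F i) *ᵥ x = ∑ i, (F i) *ᵥ x := by
  ext p
  simp only [Matrix.mulVec, dotProduct, Finset.sum_apply, Matrix.sum_apply, Finset.sum_mul]
  rw [Finset.sum_comm]

lemma primitive_hasDerivWithinAt {g : ℝ → ℝ} (hg : ContinuousOn g (Set.Ici 0))
    {t : ℝ} (ht : 0 ≤ t) :
    HasDerivWithinAt (fun u => ∫ s in (0:ℝ)..u, g s) (g t) (Set.Ici t) t := by
  have hgint : IntervalIntegrable g MeasureTheory.volume 0 t := by
    apply ContinuousOn.intervalIntegrable
    rw [Set.uIcc_of_le ht]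
    exact hg.mono (fun x hx => hx.1)
  have hmeas : StronglyMeasurableAtFilter g (nhdsWithin t (Set.Ioi t)) := by
    refine ⟨Set.Ici t, ?_, ?_⟩
    · exact Filter.mem_of_superset self_mem_nhdsWithin Set.Ioi_subset_Ici_self
    · exact ((hg.mono (Set.Ici_subset_Ici.mpr ht)).aestronglyMeasurable measurableSet_Ici)
  exact intervalIntegral.integral_hasDerivWithinAt_right hgint hmeas
    ((hg t ht).mono (fun x hx => le_of_lt (lt_of_le_of_lt ht hx)))

lemma primitive_continuousOn {g : ℝ → ℝ} (hg : ContinuousOn g (Set.Ici 0)) :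
    ContinuousOn (fun u => ∫ s in (0:ℝ)..u, g s) (Set.Ici 0) := by
  intro t ht
  rw [Set.mem_Ici] at ht
  have hI : Set.uIcc (0:ℝ) (t+1) = Set.Icc 0 (t+1) := Set.uIcc_of_le (by linarith)
  have h2 : MeasureTheory.IntegrableOn g (Set.uIcc (0:ℝ) (t+1)) MeasureTheory.volume := by
    rw [hI]
    exact (hg.mono (fun x hx => hx.1)).integrableOn_compact isCompact_Icc
  have h1 : ContinuousOn (fun u => ∫ s in (0:ℝ)..u, g s) (Set.Icc 0 (t+1)) := by
    simpa [hI] using intervalIntegral.continuousOn_primitive_interval h2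
  have h3 : ContinuousWithinAt (fun u => ∫ s in (0:ℝ)..u, g s) (Set.Icc 0 (t+1)) t :=
    h1 t ⟨ht, by linarith⟩
  have h4 : ContinuousWithinAt (fun u => ∫ s in (0:ℝ)..u, g s) (Set.Ici 0 ∩ Set.Iio (t+1)) t :=
    h3.mono (fun x hx => ⟨hx.1, le_of_lt hx.2⟩)
  rwa [continuousWithinAt_inter (Iio_mem_nhds (by linarith))] at h4

lemma ode_exp_solution {g f : ℝ → ℝ} (hg : ContinuousOn g (Set.Ici 0))
    (hfc : ContinuousOn f (Set.Ici 0))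
    (hf : ∀ t, 0 ≤ t → HasDerivWithinAt f (g t * f t) (Set.Ici t) t) :
    ∀ t, 0 ≤ t → f t = f 0 * Real.exp (∫ s in (0:ℝ)..t, g s) := by
  intro T hT
  set σ : ℝ → ℝ := fun t => ∫ s in (0:ℝ)..t, g s with hσdef
  have hσderiv : ∀ t, 0 ≤ t → HasDerivWithinAt σ (g t) (Set.Ici t) t :=
    fun t ht => primitive_hasDerivWithinAt hg ht
  have hσcont : ContinuousOn σ (Set.Icc 0 T) :=
    (primitive_continuousOn hg).mono (fun x hx => hx.1)
  set F : ℝ → ℝ := fun t => f t * Real.exp (-σ t) with hFdef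
  have hFderiv : ∀ t, 0 ≤ t → HasDerivWithinAt F 0 (Set.Ici t) t := by
    intro t ht
    have h1 : HasDerivWithinAt (fun s => Real.exp (-σ s))
        (Real.exp (-σ t) * (-g t)) (Set.Ici t) t := ((hσderiv t ht).neg).exp
    have h2 := ((hf t ht).mul h1)
    rw [show (0:ℝ) = g t * f t * Real.exp (-σ t) + f t * (Real.exp (-σ t) * -g t) by ring]
    exact h2
  have hFcont : ContinuousOn F (Set.Icc 0 T) :=
    (hfc.mono (fun x hx => hx.1)).mul (hσcont.neg.rexp)
  have hconst := constant_of_has_deriv_right_zero hFcont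
    (fun x hx => hFderiv x hx.1) T (Set.mem_Icc.mpr ⟨hT, le_refl T⟩)
  have hσ0 : σ 0 = 0 := intervalIntegral.integral_same
  have h3 : f T * Real.exp (-σ T) = f 0 * 1 := by
    simp only [hFdef] at hconst; rw [hconst, hσ0]; simp
  have h4 := congrArg (· * Real.exp (σ T)) h3
  rw [mul_assoc, ← Real.exp_add, mul_one] at h4
  simpa using h4

lemma flow_identity {d m : ℕ}
    (A : Fin m → Matrix (Fin d) (Fin d) ℝ) (y : Fin m → ℝ)
    (hA_symm : ∀ i, (A i).IsSymm)
    (q : Fin d → Fin d → ℝ) (μ : Fin m → Fin d → ℝ)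
    (hq : ∀ j l, q j ⬝ᵥ q l = if j = l then 1 else 0)
    (heig : ∀ i j, (A i) *ᵥ (q j) = μ i j • q j)
    (δ : Fin d → ℝ) (hδ : ∀ i, ∑ j, μ i j * δ j = 0)
    (W₁ W₂ : ℝ → Matrix (Fin d) (Fin d) ℝ)
    (α : ℝ) (hα : 0 < α)
    (hW₁_init : W₁ 0 = α • (1 : Matrix (Fin d) (Fin d) ℝ))
    (hW₂_init : W₂ 0 = α • (1 : Matrix (Fin d) (Fin d) ℝ))
    (hW₁_flow : ∀ t : ℝ, 0 ≤ t → ∀ p r : Fin d,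
      HasDerivAt (fun s => W₁ s p r)
        ((-((W₂ t)ᵀ * gradLoss A y (W₂ t * W₁ t))) p r) t)
    (hW₂_flow : ∀ t : ℝ, 0 ≤ t → ∀ p r : Fin d,
      HasDerivAt (fun s => W₂ s p r)
        ((-(gradLoss A y (W₂ t * W₁ t) * (W₁ t)ᵀ)) p r) t) :
    ∀ t, 0 ≤ t →
      (∀ j, 0 < q j ⬝ᵥ ((W₂ t * W₁ t) *ᵥ q j)) ∧
      (∑ j, Real.log (q j ⬝ᵥ ((W₂ t * W₁ t) *ᵥ q j)) * δ j
        = (2 * Real.log α) * ∑ j, δ j) := by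
  classical
  set M : ℝ → Matrix (Fin d) (Fin d) ℝ := fun t => W₂ t * W₁ t with hMdef
  set c : Fin m → ℝ → ℝ := fun i t => ((A i)ᵀ * M t).trace - y i with hcdef
  set gv : Fin d → ℝ → ℝ := fun j t => ∑ i, c i t * μ i j with hgvdef
  set σ : Fin d → ℝ → ℝ := fun j t => ∫ s in (0:ℝ)..t, gv j s with hσdef
  set u : Fin d → ℝ → Fin d → ℝ := fun j t => W₁ t *ᵥ q j with hudef
  set v : Fin d → ℝ → Fin d → ℝ := fun j t => (W₂ t)ᵀ *ᵥ q j with hvdef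
  -- gradLoss acts on q j by scalar gv j t
  have hG_eq : ∀ t, gradLoss A y (M t) = ∑ i, c i t • A i := by
    intro t; rfl
  have hG_q : ∀ t j, gradLoss A y (M t) *ᵥ q j = gv j t • q j := by
    intro t j
    rw [hG_eq, sum_mulVec']
    have : ∀ i, (c i t • A i) *ᵥ q j = (c i t * μ i j) • q j := by
      intro i
      rw [smul_mulVec, heig i j, smul_smul]
    rw [Finset.sum_congr rfl (fun i _ => this i), ← Finset.sum_smul]
  have hG_symm : ∀ t, (gradLoss A y (M t))ᵀ = gradLoss A y (M t) := by
    intro t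
    rw [hG_eq, Matrix.transpose_sum]
    apply Finset.sum_congr rfl
    intro i _
    rw [Matrix.transpose_smul, (hA_symm i).eq]
  -- continuity of matrix entries along the flow
  have hW₁cont : ∀ p r, ContinuousOn (fun t => W₁ t p r) (Set.Ici 0) :=
    fun p r t ht => ((hW₁_flow t ht p r).continuousAt).continuousWithinAt
  have hW₂cont : ∀ p r, ContinuousOn (fun t => W₂ t p r) (Set.Ici 0) :=
    fun p r t ht => ((hW₂_flow t ht p r).continuousAt).continuousWithinAt
  have hMcont : ∀ p r, ContinuousOn (fun t => M t p r) (Set.Ici 0) := by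
    intro p r
    have : (fun t => M t p r) = fun t => ∑ s, W₂ t p s * W₁ t s r := by
      funext t; rw [hMdef]; exact Matrix.mul_apply
    rw [this]
    exact continuousOn_finset_sum _ (fun s _ => (hW₂cont p s).mul (hW₁cont s r))
  have hccont : ∀ i, ContinuousOn (c i) (Set.Ici 0) := by
    intro i
    have : c i = fun t => (∑ p, ∑ r, (A i) r p * M t r p) - y i := by
      funext t
      rw [hcdef]
      simp only [Matrix.trace, Matrix.diag, Matrix.mul_apply, Matrix.transpose_apply]
    rw [this]
    exact (continuousOn_finset_sum _ (fun p _ => continuousOn_finset_sum _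
      (fun r _ => continuousOn_const.mul (hMcont r p)))).sub continuousOn_const
  have hgvcont : ∀ j, ContinuousOn (gv j) (Set.Ici 0) := by
    intro j
    exact continuousOn_finset_sum _ (fun i _ => (hccont i).mul continuousOn_const)
  -- derivatives of u and v
  have hu_deriv : ∀ j t, 0 ≤ t → ∀ p,
      HasDerivAt (fun s => u j s p) ((-(gv j t)) * v j t p) t := by
    intro j t ht p
    have h2 : HasDerivAt (fun s => ∑ r, W₁ s p r * q j r)
        (∑ r, (-((W₂ t)ᵀ * gradLoss A y (M t))) p r * q j r) t :=
      HasDerivAt.fun_sum (fun r _ => (hW₁_flow t ht p r).mul_const _)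
    have h3 : (-((W₂ t)ᵀ * gradLoss A y (M t))) *ᵥ q j = (-(gv j t)) • v j t := by
      rw [neg_mulVec, ← Matrix.mulVec_mulVec, hG_q t j, Matrix.mulVec_smul, neg_smul, hvdef]
    have h4 : ∑ r, (-((W₂ t)ᵀ * gradLoss A y (M t))) p r * q j r
        = (-(gv j t)) * v j t p := by
      have := congrFun h3 p
      simpa [Matrix.mulVec, dotProduct] using this
    rw [h4] at h2
    exact h2
  have hv_deriv : ∀ j t, 0 ≤ t → ∀ p,
      HasDerivAt (fun s => v j s p) ((-(gv j t)) * u j t p) t := by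
    intro j t ht p
    have h2 : HasDerivAt (fun s => ∑ r, W₂ s r p * q j r)
        (∑ r, (-(gradLoss A y (M t) * (W₁ t)ᵀ)) r p * q j r) t :=
      HasDerivAt.fun_sum (fun r _ => (hW₂_flow t ht r p).mul_const _)
    have h3 : (-(gradLoss A y (M t) * (W₁ t)ᵀ))ᵀ *ᵥ q j = (-(gv j t)) • u j t := by
      rw [Matrix.transpose_neg, Matrix.transpose_mul, Matrix.transpose_transpose, hG_symm t,
        neg_mulVec, ← Matrix.mulVec_mulVec, hG_q t j, Matrix.mulVec_smul, neg_smul, hudef]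
    have h4 : ∑ r, (-(gradLoss A y (M t) * (W₁ t)ᵀ)) r p * q j r
        = (-(gv j t)) * u j t p := by
      have := congrFun h3 p
      simpa [Matrix.mulVec, dotProduct, Matrix.transpose_apply] using this
    rw [h4] at h2
    exact h2
  -- u = v on [0, ∞): the squared difference satisfies a linear ODE with zero initial value
  have hu0 : ∀ j, u j 0 = α • q j := by
    intro j; rw [hudef]; simp only [hW₁_init, smul_mulVec, one_mulVec]
  have hv0 : ∀ j, v j 0 = α • q j := by
    intro j; rw [hvdef]
    simp only [hW₂_init, Matrix.transpose_smul, Matrix.transpose_one, smul_mulVec,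
      one_mulVec]
  have huv : ∀ j t, 0 ≤ t → u j t = v j t := by
    intro j
    set n : ℝ → ℝ := fun t => ∑ p, (u j t p - v j t p) * (u j t p - v j t p) with hndef
    have hn_deriv : ∀ t, 0 ≤ t → HasDerivAt n ((2 * gv j t) * n t) t := by
      intro t ht
      have h1 : HasDerivAt n (∑ p,
          (((-(gv j t)) * v j t p - (-(gv j t)) * u j t p) * (u j t p - v j t p)
            + (u j t p - v j t p) * ((-(gv j t)) * v j t p - (-(gv j t)) * u j t p))) t :=
        HasDerivAt.fun_sum (fun p _ =>
          (((hu_deriv j t ht p).sub (hv_deriv j t ht p)).mul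
            ((hu_deriv j t ht p).sub (hv_deriv j t ht p))))
      convert h1 using 1
      rw [hndef]
      simp only [Finset.mul_sum]
      apply Finset.sum_congr rfl
      intro p _
      ring
    have hn_cont : ContinuousOn n (Set.Ici 0) :=
      fun t ht => ((hn_deriv t ht).continuousAt).continuousWithinAt
    have hn_sol := ode_exp_solution (g := fun t => 2 * gv j t)
      (continuousOn_const.mul (hgvcont j)) hn_cont
      (fun t ht => ((hn_deriv t ht).hasDerivWithinAt))
    have hn0 : n 0 = 0 := by
      rw [hndef]
      apply Finset.sum_eq_zero
      intro p _
      rw [hu0 j, hv0 j]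
      ring
    intro t ht
    have hnt : n t = 0 := by rw [hn_sol t ht, hn0, zero_mul]
    funext p
    have hterm := (Finset.sum_eq_zero_iff_of_nonneg
      (fun p _ => mul_self_nonneg (u j t p - v j t p))).mp hnt p (Finset.mem_univ p)
    have := mul_self_eq_zero.mp hterm
    linarith
  -- solve for w j t := u j t ⬝ᵥ u j t
  have hw_deriv : ∀ j t, 0 ≤ t →
      HasDerivAt (fun s => u j s ⬝ᵥ u j s) ((-2 * gv j t) * (u j t ⬝ᵥ u j t)) t := by
    intro j t ht
    have h1 : HasDerivAt (fun s => ∑ p, u j s p * u j s p)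
        (∑ p, ((-(gv j t)) * v j t p * u j t p + u j t p * ((-(gv j t)) * v j t p))) t :=
      HasDerivAt.fun_sum (fun p _ => (hu_deriv j t ht p).mul (hu_deriv j t ht p))
    have h2 : ∑ p, ((-(gv j t)) * v j t p * u j t p + u j t p * ((-(gv j t)) * v j t p))
        = (-2 * gv j t) * (u j t ⬝ᵥ u j t) := by
      rw [huv j t ht, dotProduct, Finset.mul_sum]
      apply Finset.sum_congr rfl
      intro p _
      ring
    rw [h2] at h1
    exact h1
  have hw_cont : ∀ j, ContinuousOn (fun s => u j s ⬝ᵥ u j s) (Set.Ici 0) :=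
    fun j t ht => ((hw_deriv j t ht).continuousAt).continuousWithinAt
  have hw_sol : ∀ j t, 0 ≤ t → u j t ⬝ᵥ u j t = α ^ 2 * Real.exp (-2 * σ j t) := by
    intro j t ht
    have h1 := ode_exp_solution (g := fun t => -2 * gv j t)
      (continuousOn_const.mul (hgvcont j)) (hw_cont j)
      (fun t ht => ((hw_deriv j t ht).hasDerivWithinAt)) t ht
    have h2 : u j 0 ⬝ᵥ u j 0 = α ^ 2 := by
      rw [hu0 j, smul_dotProduct, dotProduct_smul, hq j j, if_pos rfl]
      simp [smul_eq_mul]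
      ring
    have h3 : (∫ s in (0:ℝ)..t, -2 * gv j s) = -2 * σ j t := by
      rw [hσdef]
      exact intervalIntegral.integral_const_mul _ _
    rw [h1, h2, h3]
  -- the conserved quantity: ∑ j, σ j t * δ j = 0
  have hφ : ∀ t, 0 ≤ t → ∑ j, σ j t * δ j = 0 := by
    set φ : ℝ → ℝ := fun t => ∑ j, σ j t * δ j with hφdef
    have hkey : ∀ t, ∑ j, gv j t * δ j = 0 := by
      intro t
      rw [hgvdef]
      simp only [Finset.sum_mul]
      rw [Finset.sum_comm]
      apply Finset.sum_eq_zero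
      intro i _
      have : ∀ j, c i t * μ i j * δ j = c i t * (μ i j * δ j) := fun j => by ring
      rw [Finset.sum_congr rfl (fun j _ => this j), ← Finset.mul_sum, hδ i, mul_zero]
    have hφ_deriv : ∀ t, 0 ≤ t → HasDerivWithinAt φ ((0:ℝ) * φ t) (Set.Ici t) t := by
      intro t ht
      have h1 : HasDerivWithinAt φ (∑ j, gv j t * δ j) (Set.Ici t) t := by
        apply HasDerivWithinAt.fun_sum
        intro j _
        exact (primitive_hasDerivWithinAt (hgvcont j) ht).mul_const _
      rw [hkey t] at h1
      rw [zero_mul]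
      exact h1
    have hφ_cont : ContinuousOn φ (Set.Ici 0) := by
      apply continuousOn_finset_sum
      intro j _
      exact (primitive_continuousOn (hgvcont j)).mul continuousOn_const
    have h2 := ode_exp_solution (g := fun _ => (0:ℝ)) continuousOn_const hφ_cont hφ_deriv
    intro t ht
    have h3 : φ 0 = 0 := by
      rw [hφdef]
      apply Finset.sum_eq_zero
      intro j _
      rw [hσdef]
      simp [intervalIntegral.integral_same]
    have := h2 t ht
    rw [h3, zero_mul] at this
    exact this
  -- put it all together
  intro t ht
  have hwq : ∀ j, q j ⬝ᵥ (M t *ᵥ q j) = α ^ 2 * Real.exp (-2 * σ j t) := by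
    intro j
    have h1 : q j ⬝ᵥ (M t *ᵥ q j) = v j t ⬝ᵥ u j t := by
      rw [hMdef, hudef, hvdef, ← Matrix.mulVec_mulVec, Matrix.dotProduct_mulVec,
        ← Matrix.mulVec_transpose]
    rw [h1, ← huv j t ht, hw_sol j t ht]
  have hpos : ∀ j, 0 < q j ⬝ᵥ ((W₂ t * W₁ t) *ᵥ q j) := by
    intro j
    rw [show W₂ t * W₁ t = M t from rfl, hwq j]
    positivity
  refine ⟨hpos, ?_⟩
  have hlog : ∀ j, Real.log (q j ⬝ᵥ ((W₂ t * W₁ t) *ᵥ q j))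
      = 2 * Real.log α - 2 * σ j t := by
    intro j
    rw [show W₂ t * W₁ t = M t from rfl, hwq j, Real.log_mul (by positivity) (Real.exp_ne_zero _),
      Real.log_exp, Real.log_pow]
    push_cast
    ring
  calc ∑ j, Real.log (q j ⬝ᵥ ((W₂ t * W₁ t) *ᵥ q j)) * δ j
      = ∑ j, ((2 * Real.log α) * δ j - 2 * (σ j t * δ j)) := by
        apply Finset.sum_congr rfl
        intro j _
        rw [hlog j]
        ring
    _ = (2 * Real.log α) * ∑ j, δ j - 2 * ∑ j, σ j t * δ j := by
        rw [Finset.sum_sub_distrib, ← Finset.mul_sum, ← Finset.mul_sum]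
    _ = (2 * Real.log α) * ∑ j, δ j := by rw [hφ t ht]; ring


lemma exists_simultaneous_eigenbasis {d m : ℕ} (A : Fin m → Matrix (Fin d) (Fin d) ℝ)
    (hA_symm : ∀ i, (A i).IsSymm) (hA_comm : ∀ i j, Commute (A i) (A j)) :
    ∃ (q : Fin d → (Fin d → ℝ)) (μ : Fin m → Fin d → ℝ),
      (∀ j l, q j ⬝ᵥ q l = if j = l then 1 else 0) ∧
      (∀ i j, (A i) *ᵥ (q j) = μ i j • q j) := by
  classical
  set T : Fin m → ((EuclideanSpace ℝ (Fin d)) →ₗ[ℝ] (EuclideanSpace ℝ (Fin d))) := fun i => Matrix.toEuclideanLin (A i) with hTdef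
  have hT : ∀ i, (T i).IsSymmetric := by
    intro i
    rw [hTdef]
    exact Matrix.isHermitian_iff_isSymmetric.mp
      (by rw [Matrix.IsHermitian, Matrix.conjTranspose_eq_transpose_of_trivial]; exact hA_symm i)
  have hC : Pairwise (Function.onFun Commute T) := by
    intro i j _
    have h1 : ∀ k l : Fin m, T k * T l = Matrix.toEuclideanLin (A k * A l) := by
      intro k l
      rw [hTdef]
      simp only [Matrix.toEuclideanLin_eq_toLin, Matrix.toLin_mul _ (PiLp.basisFun 2 ℝ (Fin d)) _]
      rfl
    show T i * T j = T j * T i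
    rw [h1, h1, hA_comm i j]
  set V : (Fin m → ℝ) → Submodule ℝ (EuclideanSpace ℝ (Fin d)) := fun γ => ⨅ i, Module.End.eigenspace (T i) (γ i) with hVdef
  have htop : ⨆ γ, V γ = ⊤ := LinearMap.IsSymmetric.iSup_iInf_eq_top_of_commute hT hC
  have hOF := LinearMap.IsSymmetric.orthogonalFamily_iInf_eigenspaces hT
  have hind : iSupIndep V := hOF.independent
  have hfin : {γ | V γ ≠ ⊥}.Finite := WellFoundedGT.finite_ne_bot_of_iSupIndep hind
  set s := hfin.toFinset with hsdef
  haveI : Fintype {γ // γ ∈ s} := inferInstance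
  set V' : {γ // γ ∈ s} → Submodule ℝ (EuclideanSpace ℝ (Fin d)) := fun γ => V γ.1 with hV'def
  have hOF' : OrthogonalFamily ℝ (fun γ => V' γ) (fun γ => (V' γ).subtypeₗᵢ) :=
    hOF.comp Subtype.val_injective
  have hsup' : ⨆ γ', V' γ' = ⊤ := by
    rw [← top_le_iff, ← htop]
    apply iSup_le
    intro γ
    by_cases h : V γ = ⊥
    · rw [h]; exact bot_le
    · exact le_iSup (fun γ' => V' γ') ⟨γ, by rw [hsdef]; simpa using h⟩
  have hint : DirectSum.IsInternal V' := by
    rw [hOF'.isInternal_iff, hsup', Submodule.top_orthogonal_eq_bot]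
  have hn : Module.finrank ℝ (EuclideanSpace ℝ (Fin d)) = d := finrank_euclideanSpace_fin
  set b := hint.subordinateOrthonormalBasis hn hOF' with hbdef
  set idx : Fin d → {γ // γ ∈ s} := fun j => hint.subordinateOrthonormalBasisIndex hn j hOF'
    with hidxdef
  have hmem : ∀ j : Fin d, b j ∈ V' (idx j) :=
    fun j => hint.subordinateOrthonormalBasis_subordinate hn j hOF'
  refine ⟨fun j => b j, fun i j => ((idx j : Fin m → ℝ)) i, ?_, ?_⟩
  · intro j l
    have := orthonormal_iff_ite.mp b.orthonormal j l
    rw [← this]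
    simp [PiLp.inner_apply, dotProduct, conj_trivial, mul_comm]
  · intro i j
    have h1 := hmem j
    rw [hV'def, hVdef] at h1
    rw [Submodule.mem_iInf] at h1
    have h2 := h1 i
    rw [Module.End.mem_eigenspace_iff] at h2
    exact congrArg (WithLp.equiv 2 (Fin d → ℝ)) h2


lemma trace_eq_sum_dot {d : ℕ} {q : Fin d → Fin d → ℝ}
    (hq : ∀ j l, q j ⬝ᵥ q l = if j = l then 1 else 0) (M : Matrix (Fin d) (Fin d) ℝ) :
    M.trace = ∑ j, q j ⬝ᵥ (M *ᵥ q j) := by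
  classical
  set Q : Matrix (Fin d) (Fin d) ℝ := Matrix.of (fun p j => q j p) with hQdef
  have hQtQ : Qᵀ * Q = 1 := by
    ext j l
    rw [Matrix.mul_apply, Matrix.one_apply]
    simpa [hQdef, Matrix.transpose_apply, dotProduct] using hq j l
  have hQQt : Q * Qᵀ = 1 := mul_eq_one_comm.mp hQtQ
  have h1 : Qᵀ * (M * Q) = Qᵀ * M * Q := by rw [Matrix.mul_assoc]
  have h2 : (Qᵀ * (M * Q)).trace = ∑ j, q j ⬝ᵥ (M *ᵥ q j) := by
    rw [Matrix.trace]
    apply Finset.sum_congr rfl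
    intro j _
    rw [Matrix.diag_apply, Matrix.mul_apply]
    simp only [Matrix.transpose_apply, hQdef, Matrix.of_apply, dotProduct, Matrix.mulVec,
      Matrix.mul_apply, dotProduct]
  rw [← h2, Matrix.trace_mul_comm, Matrix.mul_assoc, hQQt, Matrix.mul_one]


lemma dot_shift {d : ℕ} (A : Matrix (Fin d) (Fin d) ℝ) (x y : Fin d → ℝ) :
    (A *ᵥ x) ⬝ᵥ y = x ⬝ᵥ (Aᵀ *ᵥ y) := by
  rw [Matrix.dotProduct_mulVec, Matrix.vecMul_transpose]

lemma cont_quadform {d : ℕ} (x : Fin d → ℝ) :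
    Continuous (fun M : Matrix (Fin d) (Fin d) ℝ => x ⬝ᵥ (M *ᵥ x)) := by
  have : (fun M : Matrix (Fin d) (Fin d) ℝ => x ⬝ᵥ (M *ᵥ x))
      = fun M => ∑ p, x p * (∑ r, M p r * x r) := rfl
  rw [this]
  exact continuous_finset_sum _ (fun p _ => continuous_const.mul
    (continuous_finset_sum _ (fun r _ =>
      (((continuous_apply r).comp (continuous_apply p) : Continuous fun M : Matrix (Fin d) (Fin d) ℝ => M p r).mul continuous_const))))

end Helpers

/-- Gradient flow on the asymmetric depth-2 factorization `(W₁, W₂) ↦ ℓ(W₂ W₁)`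
initialized at `α·I` (for commuting, symmetric, linearly independent measurement
matrices): the limit of the product matrix, as `t → ∞` and then `α → 0⁺`, if it exists,
is PSD and feasible, is a feasible PSD matrix of minimal nuclear norm. -/
theorem stmt2 {d m : ℕ}
    (A : Fin m → Matrix (Fin d) (Fin d) ℝ) (y : Fin m → ℝ)
    (hA_symm : ∀ i, (A i).IsSymm)
    (hA_comm : ∀ i j, Commute (A i) (A j))
    (hA_li : LinearIndependent ℝ A)
    (W₁ W₂ : ℝ → ℝ → Matrix (Fin d) (Fin d) ℝ)
    (hW₁_init : ∀ α : ℝ, 0 < α → W₁ α 0 = α • (1 : Matrix (Fin d) (Fin d) ℝ))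
    (hW₂_init : ∀ α : ℝ, 0 < α → W₂ α 0 = α • (1 : Matrix (Fin d) (Fin d) ℝ))
    (hW₁_flow : ∀ α : ℝ, 0 < α → ∀ t : ℝ, 0 ≤ t → ∀ p q : Fin d,
      HasDerivAt (fun s => W₁ α s p q)
        ((-((W₂ α t)ᵀ * gradLoss A y (W₂ α t * W₁ α t))) p q) t)
    (hW₂_flow : ∀ α : ℝ, 0 < α → ∀ t : ℝ, 0 ≤ t → ∀ p q : Fin d,
      HasDerivAt (fun s => W₂ α s p q)
        ((-(gradLoss A y (W₂ α t * W₁ α t) * (W₁ α t)ᵀ)) p q) t)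
    (Winf : ℝ → Matrix (Fin d) (Fin d) ℝ)
    (hWinf : ∀ α : ℝ, 0 < α →
      Tendsto (fun t => W₂ α t * W₁ α t) atTop (nhds (Winf α)))
    (Wbar : Matrix (Fin d) (Fin d) ℝ)
    (hWbar : Tendsto Winf (nhdsWithin 0 (Set.Ioi 0)) (nhds Wbar))
    (hWbar_psd : Wbar.PosSemidef)
    (hWbar_feas : ∀ i, ((A i)ᵀ * Wbar).trace = y i) :
    ∀ W : Matrix (Fin d) (Fin d) ℝ, W.PosSemidef →
      (∀ i, ((A i)ᵀ * W).trace = y i) → Wbar.trace ≤ W.trace := by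

  classical
  intro W hW hWfeas
  obtain ⟨q, μ, hq, heig⟩ := exists_simultaneous_eigenbasis A hA_symm hA_comm
  set Δ : Matrix (Fin d) (Fin d) ℝ := W - Wbar with hΔdef
  set δ : Fin d → ℝ := fun j => q j ⬝ᵥ (Δ *ᵥ q j) with hδdef
  set wbar : Fin d → ℝ := fun j => q j ⬝ᵥ (Wbar *ᵥ q j) with hwbardef
  have hδsum : ∀ i, ∑ j, μ i j * δ j = 0 := by
    intro i
    have h1 : ∀ j, μ i j * δ j = q j ⬝ᵥ (((A i)ᵀ * Δ) *ᵥ q j) := by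
      intro j
      rw [hδdef]
      calc μ i j * (q j ⬝ᵥ (Δ *ᵥ q j)) = (μ i j • q j) ⬝ᵥ (Δ *ᵥ q j) := by
            rw [smul_dotProduct, smul_eq_mul]
        _ = (A i *ᵥ q j) ⬝ᵥ (Δ *ᵥ q j) := by rw [heig]
        _ = q j ⬝ᵥ ((A i)ᵀ *ᵥ (Δ *ᵥ q j)) := dot_shift _ _ _
        _ = q j ⬝ᵥ (((A i)ᵀ * Δ) *ᵥ q j) := by rw [Matrix.mulVec_mulVec]
    rw [Finset.sum_congr rfl (fun j _ => h1 j), ← trace_eq_sum_dot hq]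
    rw [hΔdef, Matrix.mul_sub, Matrix.trace_sub, hWfeas i, hWbar_feas i, sub_self]
  have htraceΔ : W.trace - Wbar.trace = ∑ j, δ j := by
    have h1 := trace_eq_sum_dot hq Δ
    rw [hΔdef, Matrix.trace_sub] at h1
    exact h1
  rw [← sub_nonneg, htraceΔ]
  -- PSD facts
  have hwbar_nonneg : ∀ j, 0 ≤ wbar j := by
    intro j
    have := hWbar_psd.dotProduct_mulVec_nonneg (q j)
    simpa [hwbardef] using this
  have hker : ∀ j, wbar j = 0 → 0 ≤ δ j := by
    intro j hj
    have h0 : Wbar *ᵥ q j = 0 := by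
      apply (hWbar_psd.dotProduct_mulVec_zero_iff (q j)).mp
      simpa [hwbardef] using hj
    have h1 : δ j = q j ⬝ᵥ (W *ᵥ q j) := by
      show q j ⬝ᵥ ((W - Wbar) *ᵥ q j) = _
      rw [Matrix.sub_mulVec, dotProduct_sub, h0, dotProduct_zero, sub_zero]
    rw [h1]
    have := hW.dotProduct_mulVec_nonneg (q j)
    simpa using this
  -- limits
  have hlim_t : ∀ α : ℝ, 0 < α → ∀ j, Tendsto (fun t => q j ⬝ᵥ ((W₂ α t * W₁ α t) *ᵥ q j))
      atTop (nhds (q j ⬝ᵥ (Winf α *ᵥ q j))) :=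
    fun α hα j => ((cont_quadform (q j)).tendsto (Winf α)).comp (hWinf α hα)
  have hlim_α : ∀ j, Tendsto (fun α => q j ⬝ᵥ (Winf α *ᵥ q j))
      (nhdsWithin 0 (Set.Ioi 0)) (nhds (wbar j)) :=
    fun j => ((cont_quadform (q j)).tendsto Wbar).comp hWbar
  -- the ε argument
  have hfinal : ∀ ε : ℝ, 0 < ε → -ε ≤ ∑ j, δ j := by
    intro ε hε
    have hρ : ∀ j, ∃ ρ : ℝ, 0 < ρ ∧ ∀ x : ℝ, |x - wbar j| < ρ →
        (wbar j = 0 → x ≤ 1) ∧ (wbar j ≠ 0 → |Real.log x - Real.log (wbar j)| ≤ 1) := by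
      intro j
      by_cases h : wbar j = 0
      · refine ⟨1, one_pos, fun x hx => ⟨fun _ => ?_, fun h' => absurd h h'⟩⟩
        rw [h, sub_zero] at hx
        linarith [(abs_lt.mp hx).2]
      · obtain ⟨ρ, hρpos, hρp⟩ := Metric.continuousAt_iff.mp (Real.continuousAt_log h) 1 one_pos
        refine ⟨ρ, hρpos, fun x hx => ⟨fun h' => absurd h' h, fun _ => ?_⟩⟩
        have := hρp (show dist x (wbar j) < ρ by rwa [Real.dist_eq])
        rw [Real.dist_eq] at this
        exact le_of_lt this
    choose ρ hρpos hρprop using hρ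
    set K : ℝ := ∑ j, (|Real.log (wbar j)| + 1) * |δ j| with hKdef
    have hK0 : 0 ≤ K := Finset.sum_nonneg (fun j _ => mul_nonneg
      (by positivity) (abs_nonneg _))
    have hev1 : ∀ᶠ α in nhdsWithin (0:ℝ) (Set.Ioi 0),
        ∀ j, |q j ⬝ᵥ (Winf α *ᵥ q j) - wbar j| < ρ j / 2 := by
      rw [Filter.eventually_all]
      intro j
      have := (Metric.tendsto_nhds.mp (hlim_α j)) (ρ j / 2) (half_pos (hρpos j))
      simpa [Real.dist_eq] using this
    have hev2 : ∀ᶠ α in nhdsWithin (0:ℝ) (Set.Ioi 0), α < 1 :=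
      Filter.mem_of_superset (nhdsWithin_le_nhds (Iio_mem_nhds one_pos)) (fun x hx => hx)
    have hev3 : ∀ᶠ α in nhdsWithin (0:ℝ) (Set.Ioi 0),
        Real.log α ≤ -(K / (2 * ε)) - 1 :=
      Real.tendsto_log_nhdsGT_zero.eventually (eventually_le_atBot _)
    have hev4 : ∀ᶠ α in nhdsWithin (0:ℝ) (Set.Ioi 0), 0 < α :=
      eventually_mem_nhdsWithin.mono (fun x hx => hx)
    obtain ⟨α, ⟨⟨hα1, hα2⟩, hα3⟩, hα0⟩ := (((hev1.and hev2).and hev3).and hev4).exists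
    -- choose t
    have hevt : ∀ᶠ t in atTop, (∀ j,
        |q j ⬝ᵥ ((W₂ α t * W₁ α t) *ᵥ q j) - q j ⬝ᵥ (Winf α *ᵥ q j)| < ρ j / 2) ∧ (0:ℝ) ≤ t := by
      refine Filter.Eventually.and ?_ (eventually_ge_atTop 0)
      rw [Filter.eventually_all]
      intro j
      have := (Metric.tendsto_nhds.mp (hlim_t α hα0 j)) (ρ j / 2) (half_pos (hρpos j))
      simpa [Real.dist_eq] using this
    obtain ⟨t, htclose, ht0⟩ := hevt.exists
    obtain ⟨hpos, hident⟩ := flow_identity A y hA_symm q μ hq heig δ hδsum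
      (W₁ α) (W₂ α) α hα0 (hW₁_init α hα0) (hW₂_init α hα0)
      (hW₁_flow α hα0) (hW₂_flow α hα0) t ht0
    set L : Fin d → ℝ := fun j => Real.log (q j ⬝ᵥ ((W₂ α t * W₁ α t) *ᵥ q j)) with hLdef
    have hclose : ∀ j, |q j ⬝ᵥ ((W₂ α t * W₁ α t) *ᵥ q j) - wbar j| < ρ j := by
      intro j
      have h1 := htclose j
      have h2 := hα1 j
      calc |q j ⬝ᵥ ((W₂ α t * W₁ α t) *ᵥ q j) - wbar j|
          ≤ |q j ⬝ᵥ ((W₂ α t * W₁ α t) *ᵥ q j) - q j ⬝ᵥ (Winf α *ᵥ q j)|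
            + |q j ⬝ᵥ (Winf α *ᵥ q j) - wbar j| := abs_sub_le _ _ _
        _ < ρ j / 2 + ρ j / 2 := add_lt_add h1 h2
        _ = ρ j := by ring
    have hbound : ∀ j, L j * δ j ≤ (|Real.log (wbar j)| + 1) * |δ j| := by
      intro j
      by_cases h : wbar j = 0
      · have hle1 : q j ⬝ᵥ ((W₂ α t * W₁ α t) *ᵥ q j) ≤ 1 :=
          ((hρprop j _ (hclose j)).1 h)
        have hL : L j ≤ 0 := Real.log_nonpos (le_of_lt (hpos j)) hle1
        have hδj : 0 ≤ δ j := hker j h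
        calc L j * δ j ≤ 0 := mul_nonpos_of_nonpos_of_nonneg hL hδj
          _ ≤ (|Real.log (wbar j)| + 1) * |δ j| := mul_nonneg (by positivity) (abs_nonneg _)
      · have h1 : |L j - Real.log (wbar j)| ≤ 1 := (hρprop j _ (hclose j)).2 h
        have h2 : |L j| ≤ |Real.log (wbar j)| + 1 := by
          calc |L j| = |(L j - Real.log (wbar j)) + Real.log (wbar j)| := by ring_nf
            _ ≤ |L j - Real.log (wbar j)| + |Real.log (wbar j)| := abs_add_le _ _
            _ ≤ |Real.log (wbar j)| + 1 := by linarith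
        calc L j * δ j ≤ |L j * δ j| := le_abs_self _
          _ = |L j| * |δ j| := abs_mul _ _
          _ ≤ (|Real.log (wbar j)| + 1) * |δ j| :=
              mul_le_mul_of_nonneg_right h2 (abs_nonneg _)
    have hsum_bound : ∑ j, L j * δ j ≤ K := Finset.sum_le_sum (fun j _ => hbound j)
    have hlogneg : Real.log α < 0 := Real.log_neg hα0 hα2
    have hKε : K ≤ ε * (-(2 * Real.log α)) := by
      have h1 : -(2 * Real.log α) ≥ K / ε + 2 := by
        have := hα3
        have h2 : Real.log α ≤ -(K / (2*ε)) - 1 := this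
        have h3 : K / (2*ε) = (K/ε)/2 := by ring
        nlinarith
      calc K = ε * (K / ε) := by field_simp
        _ ≤ ε * (K / ε + 2) := by nlinarith
        _ ≤ ε * (-(2 * Real.log α)) := by nlinarith
    have hident' : (2 * Real.log α) * ∑ j, δ j ≤ ε * (-(2 * Real.log α)) := by
      rw [← hident]
      exact le_trans hsum_bound hKε
    nlinarith [hident']
  by_contra hcon
  push_neg at hcon
  have := hfinal (-(∑ j, δ j) / 2) (by linarith)
  linarith
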